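/- Let x and y be words using only the two letters i and i+1. Then u_x(λ) = u_y(λ) for all partitions λ if and only if x and y are Knuth equivalent. -/

import Mathlib

/-- A partition, represented by its column lengths (the conjugate):
`c i` is the number of boxes in column `i`. -/
def IsPartition (c : ℕ+ → ℕ) : Prop :=
  (∀ i : ℕ+, c (i + 1) ≤ c i) ∧ ∃ N : ℕ+, ∀ i : ℕ+, N ≤ i → c i = 0

open Classical in
/-- The Schur operator `u_i`: add a box to column `i` if the result is a
partition, else `none` (representing `0`). -/
noncomputable def addBox (i : ℕ+) (c : ℕ+ → ℕ) : Option (ℕ+ → ℕ) :=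
  if IsPartition (Function.update c i (c i + 1)) then
    some (Function.update c i (c i + 1))
  else none

/-- `u_x = u_{x_1} ∘ ⋯ ∘ u_{x_l}` for a word `x = x_1 ⋯ x_l`. -/
noncomputable def schurWord (x : List ℕ+) (c : ℕ+ → ℕ) : Option (ℕ+ → ℕ) :=
  x.foldr (fun i o => o.bind (addBox i)) (some c)

/-- `α_i(x)`: the maximum over suffixes `s` of `x` of `w_{i+1}(s) - w_i(s)`. -/
def alpha (i : ℕ+) (x : List ℕ+) : ℕ :=
  (x.tails.map (fun s => s.count (i + 1) - s.count i)).foldr max 0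

/-- An elementary Knuth move on consecutive subwords:
`bac ↔ bca` for `a < b ≤ c`, and `acb ↔ cab` for `a ≤ b < c`. -/
inductive KnuthStep : List ℕ+ → List ℕ+ → Prop
  | k1 (p s : List ℕ+) (a b c : ℕ+) (h1 : a < b) (h2 : b ≤ c) :
      KnuthStep (p ++ [b, a, c] ++ s) (p ++ [b, c, a] ++ s)
  | k2 (p s : List ℕ+) (a b c : ℕ+) (h1 : a ≤ b) (h2 : b < c) :
      KnuthStep (p ++ [a, c, b] ++ s) (p ++ [c, a, b] ++ s)

/-- Knuth equivalence of words. -/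
def KnuthEquiv : List ℕ+ → List ℕ+ → Prop := Relation.EqvGen KnuthStep

-- PNat helpers
lemma pn_lt_succ (a : ℕ+) : a < a + 1 := PNat.lt_add_right a 1
lemma pn_ne_succ (a : ℕ+) : a ≠ a + 1 := ne_of_lt (pn_lt_succ a)
lemma pn_succ_ne (a : ℕ+) : a + 1 ≠ a := (pn_ne_succ a).symm
lemma pn_succ_inj {a b : ℕ+} (h : a + 1 = b + 1) : a = b := add_right_cancel h
lemma pn_pred_lt {a b : ℕ+} (h : a = b + 1) : b < a := h ▸ pn_lt_succ b
lemma pn_pred_ne {a b : ℕ+} (h : a = b + 1) : b ≠ a := ne_of_lt (pn_pred_lt h)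
lemma pn_pred_ne_succ {a b : ℕ+} (h : a = b + 1) : b ≠ a + 1 :=
  ne_of_lt (lt_trans (pn_pred_lt h) (pn_lt_succ a))

lemma isPartition_update_iff {c : ℕ+ → ℕ} (hc : IsPartition c) (i : ℕ+) :
    IsPartition (Function.update c i (c i + 1)) ↔ ∀ j : ℕ+, i = j + 1 → c i < c j := by
  constructor
  · intro h j hj
    have h1 := h.1 j
    rw [← hj] at h1
    rw [Function.update_self] at h1
    rw [Function.update_of_ne (pn_pred_ne hj)] at h1
    omega
  · intro h
    constructor
    · intro j
      by_cases h1 : j + 1 = i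
      · rw [Function.update_apply, Function.update_apply, if_pos h1,
          if_neg (show j ≠ i by rw [← h1]; exact pn_ne_succ j)]
        have := h j h1.symm
        omega
      · rw [Function.update_apply, Function.update_apply, if_neg h1]
        by_cases h2 : j = i
        · rw [if_pos h2]
          have := hc.1 j
          rw [h2] at this ⊢
          omega
        · rw [if_neg h2]; exact hc.1 j
    · obtain ⟨N, hN⟩ := hc.2
      refine ⟨N + i, fun j hj => ?_⟩
      have hNj : N ≤ j := le_trans (le_of_lt (PNat.lt_add_right N i)) hj
      have hij : i < j := lt_of_lt_of_le (PNat.lt_add_left i N) hj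
      rw [Function.update_of_ne (ne_of_gt hij)]
      exact hN j hNj

example : True := trivial

lemma addBox_pos {c : ℕ+ → ℕ} (hc : IsPartition c) {i : ℕ+}
    (h : ∀ j : ℕ+, i = j + 1 → c i < c j) :
    addBox i c = some (Function.update c i (c i + 1)) := by
  rw [addBox, if_pos ((isPartition_update_iff hc i).mpr h)]

lemma addBox_neg {c : ℕ+ → ℕ} (hc : IsPartition c) {i : ℕ+}
    (h : ¬ ∀ j : ℕ+, i = j + 1 → c i < c j) :
    addBox i c = none := by
  rw [addBox, if_neg (fun hp => h ((isPartition_update_iff hc i).mp hp))]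

lemma addBox_isPartition {c d : ℕ+ → ℕ} {i : ℕ+} (h : addBox i c = some d) :
    IsPartition d := by
  rw [addBox] at h
  split_ifs at h with hp
  · cases h; exact hp

lemma update_isPartition {c : ℕ+ → ℕ} (hc : IsPartition c) {i : ℕ+}
    (h : ∀ j : ℕ+, i = j + 1 → c i < c j) :
    IsPartition (Function.update c i (c i + 1)) :=
  (isPartition_update_iff hc i).mpr h

lemma schurWord_nil (c : ℕ+ → ℕ) : schurWord [] c = some c := rfl

lemma schurWord_cons (a : ℕ+) (x : List ℕ+) (c : ℕ+ → ℕ) :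
    schurWord (a :: x) c = (schurWord x c).bind (addBox a) := rfl

lemma schurWord_append (p q : List ℕ+) (c : ℕ+ → ℕ) :
    schurWord (p ++ q) c = p.foldr (fun i o => o.bind (addBox i)) (schurWord q c) := by
  rw [schurWord, List.foldr_append]; rfl

lemma foldr_none (x : List ℕ+) :
    x.foldr (fun i o => o.bind (addBox i)) none = none := by
  induction x with
  | nil => rfl
  | cons a r ih => simp [List.foldr_cons, ih]

lemma schurWord_isPartition {c d : ℕ+ → ℕ} {x : List ℕ+} (hc : IsPartition c)
    (h : schurWord x c = some d) : IsPartition d := by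
  induction x generalizing d with
  | nil => rw [schurWord_nil] at h; cases h; exact hc
  | cons a r ih =>
    rw [schurWord_cons] at h
    cases he : schurWord r c with
    | none => rw [he] at h; simp at h
    | some e =>
      rw [he] at h
      simp only [Option.bind_some] at h
      exact addBox_isPartition h

lemma schurWord_three (p q r : ℕ+) (c : ℕ+ → ℕ) :
    schurWord [p, q, r] c = ((addBox r c).bind (addBox q)).bind (addBox p) := rfl

lemma plactic2 (x : ℕ+) {c : ℕ+ → ℕ} (hc : IsPartition c) :
    schurWord [x, x+1, x] c = schurWord [x+1, x, x] c := by
  rw [schurWord_three, schurWord_three]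
  by_cases hX0 : ∀ j : ℕ+, x = j + 1 → c x < c j
  · rw [addBox_pos hc hX0, Option.bind_some, Option.bind_some]
    have hpc1 : IsPartition (Function.update c x (c x + 1)) := update_isPartition hc hX0
    have e1 : Function.update c x (c x + 1) x = c x + 1 := Function.update_self _ _ _
    have e2 : Function.update c x (c x + 1) (x+1) = c (x+1) :=
      Function.update_of_ne (pn_succ_ne x) _ _
    have hok : ∀ j : ℕ+, x + 1 = j + 1 →
        Function.update c x (c x + 1) (x+1) < Function.update c x (c x + 1) j := by
      intro j hj
      have hjx : j = x := (pn_succ_inj hj).symm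
      rw [hjx, e1, e2]
      have := hc.1 x
      omega
    rw [addBox_pos hpc1 hok, Option.bind_some]
    by_cases hX1 : ∀ j : ℕ+, x = j + 1 → c x + 1 < c j
    · have hcond2 : ∀ j : ℕ+, x = j + 1 →
          Function.update (Function.update c x (c x + 1)) (x+1)
            (Function.update c x (c x + 1) (x+1) + 1) x <
          Function.update (Function.update c x (c x + 1)) (x+1)
            (Function.update c x (c x + 1) (x+1) + 1) j := by
        intro j hj
        rw [Function.update_of_ne (pn_ne_succ x), e1,
          Function.update_of_ne (pn_pred_ne_succ hj), Function.update_of_ne (pn_pred_ne hj)]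
        exact hX1 j hj
      have hcond2' : ∀ j : ℕ+, x = j + 1 →
          Function.update c x (c x + 1) x < Function.update c x (c x + 1) j := by
        intro j hj
        rw [e1, Function.update_of_ne (pn_pred_ne hj)]
        exact hX1 j hj
      rw [addBox_pos (update_isPartition hpc1 hok) hcond2, addBox_pos hpc1 hcond2',
        Option.bind_some]
      have hokR : ∀ j : ℕ+, x + 1 = j + 1 →
          Function.update (Function.update c x (c x + 1)) x
            (Function.update c x (c x + 1) x + 1) (x+1) <
          Function.update (Function.update c x (c x + 1)) x
            (Function.update c x (c x + 1) x + 1) j := by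
        intro j hj
        have hjx : j = x := (pn_succ_inj hj).symm
        rw [hjx, Function.update_of_ne (pn_succ_ne x), e2, Function.update_self, e1]
        have := hc.1 x
        omega
      rw [addBox_pos (update_isPartition hpc1 hcond2') hokR]
      congr 1
      funext j
      by_cases hjx : j = x
      · simp [hjx, Function.update_apply, pn_ne_succ x, pn_succ_ne x]
      · by_cases hjy : j = x + 1
        · simp [hjy, Function.update_apply, pn_ne_succ x, pn_succ_ne x]
        · simp [Function.update_apply, hjx, hjy]
    · have h1 : addBox x (Function.update (Function.update c x (c x + 1)) (x+1)
          (Function.update c x (c x + 1) (x+1) + 1)) = none := by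
        apply addBox_neg (update_isPartition hpc1 hok)
        intro hcon
        apply hX1
        intro j hj
        have := hcon j hj
        rw [Function.update_of_ne (pn_ne_succ x), e1,
          Function.update_of_ne (pn_pred_ne_succ hj), Function.update_of_ne (pn_pred_ne hj)] at this
        exact this
      have h2 : addBox x (Function.update c x (c x + 1)) = none := by
        apply addBox_neg hpc1
        intro hcon
        apply hX1
        intro j hj
        have := hcon j hj
        rw [e1, Function.update_of_ne (pn_pred_ne hj)] at this
        exact this
      rw [h1, h2, Option.bind_none]
  · rw [addBox_neg hc hX0, Option.bind_none, Option.bind_none, Option.bind_none]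

lemma plactic1 (x : ℕ+) {c : ℕ+ → ℕ} (hc : IsPartition c) :
    schurWord [x+1, x, x+1] c = schurWord [x+1, x+1, x] c := by
  rw [schurWord_three, schurWord_three]
  by_cases hY : c (x+1) < c x
  · have hcondY : ∀ j : ℕ+, x + 1 = j + 1 → c (x+1) < c j := by
      intro j hj
      rw [(pn_succ_inj hj).symm]
      exact hY
    rw [addBox_pos hc hcondY, Option.bind_some]
    have hpc1 : IsPartition (Function.update c (x+1) (c (x+1) + 1)) :=
      update_isPartition hc hcondY
    have e1 : Function.update c (x+1) (c (x+1) + 1) x = c x :=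
      Function.update_of_ne (pn_ne_succ x) _ _
    by_cases hX0 : ∀ j : ℕ+, x = j + 1 → c x < c j
    · have hcond1 : ∀ j : ℕ+, x = j + 1 →
          Function.update c (x+1) (c (x+1) + 1) x < Function.update c (x+1) (c (x+1) + 1) j := by
        intro j hj
        rw [e1, Function.update_of_ne (pn_pred_ne_succ hj)]
        exact hX0 j hj
      rw [addBox_pos hpc1 hcond1, Option.bind_some]
      have hcond2 : ∀ j : ℕ+, x + 1 = j + 1 →
          Function.update (Function.update c (x+1) (c (x+1) + 1)) x
            (Function.update c (x+1) (c (x+1) + 1) x + 1) (x+1) <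
          Function.update (Function.update c (x+1) (c (x+1) + 1)) x
            (Function.update c (x+1) (c (x+1) + 1) x + 1) j := by
        intro j hj
        rw [(pn_succ_inj hj).symm, Function.update_of_ne (pn_succ_ne x), Function.update_self,
          Function.update_self, e1]
        omega
      rw [addBox_pos (update_isPartition hpc1 hcond1) hcond2]
      -- RHS
      rw [addBox_pos hc hX0, Option.bind_some]
      have hpd1 : IsPartition (Function.update c x (c x + 1)) := update_isPartition hc hX0
      have f1 : Function.update c x (c x + 1) (x+1) = c (x+1) :=
        Function.update_of_ne (pn_succ_ne x) _ _
      have hcond1' : ∀ j : ℕ+, x + 1 = j + 1 →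
          Function.update c x (c x + 1) (x+1) < Function.update c x (c x + 1) j := by
        intro j hj
        rw [(pn_succ_inj hj).symm, f1, Function.update_self]
        have := hc.1 x
        omega
      rw [addBox_pos hpd1 hcond1', Option.bind_some]
      have hcond2' : ∀ j : ℕ+, x + 1 = j + 1 →
          Function.update (Function.update c x (c x + 1)) (x+1)
            (Function.update c x (c x + 1) (x+1) + 1) (x+1) <
          Function.update (Function.update c x (c x + 1)) (x+1)
            (Function.update c x (c x + 1) (x+1) + 1) j := by
        intro j hj
        rw [(pn_succ_inj hj).symm, Function.update_self,
          Function.update_of_ne (pn_ne_succ x), Function.update_self, f1]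
        omega
      rw [addBox_pos (update_isPartition hpd1 hcond1') hcond2']
      congr 1
      funext j
      by_cases hjx : j = x
      · simp [hjx, Function.update_apply, pn_ne_succ x, pn_succ_ne x]
      · by_cases hjy : j = x + 1
        · simp [hjy, Function.update_apply, pn_ne_succ x, pn_succ_ne x]
        · simp [Function.update_apply, hjx, hjy]
    · have h1 : addBox x (Function.update c (x+1) (c (x+1) + 1)) = none := by
        apply addBox_neg hpc1
        intro hcon
        apply hX0
        intro j hj
        have := hcon j hj
        rw [e1, Function.update_of_ne (pn_pred_ne_succ hj)] at this
        exact this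
      have h2 : addBox x c = none := addBox_neg hc hX0
      rw [h1, h2, Option.bind_none, Option.bind_none]
  · have h1 : addBox (x+1) c = none := by
      apply addBox_neg hc
      intro hall
      exact hY (hall x rfl)
    rw [h1, Option.bind_none, Option.bind_none]
    by_cases hX0 : ∀ j : ℕ+, x = j + 1 → c x < c j
    · rw [addBox_pos hc hX0, Option.bind_some]
      have hpd1 : IsPartition (Function.update c x (c x + 1)) := update_isPartition hc hX0
      have f1 : Function.update c x (c x + 1) (x+1) = c (x+1) :=
        Function.update_of_ne (pn_succ_ne x) _ _
      have hcond1' : ∀ j : ℕ+, x + 1 = j + 1 →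
          Function.update c x (c x + 1) (x+1) < Function.update c x (c x + 1) j := by
        intro j hj
        rw [(pn_succ_inj hj).symm, f1, Function.update_self]
        have := hc.1 x
        omega
      rw [addBox_pos hpd1 hcond1', Option.bind_some]
      have h2 : addBox (x+1) (Function.update (Function.update c x (c x + 1)) (x+1)
          (Function.update c x (c x + 1) (x+1) + 1)) = none := by
        apply addBox_neg (update_isPartition hpd1 hcond1')
        intro hcon
        have := hcon x rfl
        rw [Function.update_self, Function.update_of_ne (pn_ne_succ x),
          Function.update_self, f1] at this
        omega
      rw [h2]
    · rw [addBox_neg hc hX0, Option.bind_none, Option.bind_none]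

lemma knuthStep_letters {u v : List ℕ+} (h : KnuthStep u v) (P : ℕ+ → Prop) :
    (∀ a ∈ u, P a) ↔ (∀ a ∈ v, P a) := by
  cases h <;> simp only [List.mem_append, List.mem_cons, List.not_mem_nil] <;>
    constructor <;> intro hall z hz <;> apply hall <;> tauto

lemma step_schur {i : ℕ+} {u v : List ℕ+} (h : KnuthStep u v)
    (hu : ∀ a ∈ u, a = i ∨ a = i + 1) :
    ∀ c : ℕ+ → ℕ, IsPartition c → schurWord u c = schurWord v c := by
  intro c0 hc0
  have hii : i < i + 1 := pn_lt_succ i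
  cases h with
  | k1 p s a b c h1 h2 =>
    have ha : a = i ∨ a = i + 1 := hu a (by simp)
    have hb : b = i ∨ b = i + 1 := hu b (by simp)
    have hcc : c = i ∨ c = i + 1 := hu c (by simp)
    have ha' : a = i := by
      rcases ha with h' | h'
      · exact h'
      · exfalso
        subst h'
        rcases hb with h'' | h'' <;> subst h''
        · exact absurd h1 (not_lt.mpr (le_of_lt hii))
        · exact lt_irrefl _ h1
    have hb' : b = i + 1 := by
      rcases hb with h' | h'
      · exfalso; subst h'; subst ha'; exact lt_irrefl _ h1
      · exact h'
    have hc' : c = i + 1 := by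
      rcases hcc with h' | h'
      · exfalso; subst h'; subst hb'; exact absurd h2 (not_le.mpr hii)
      · exact h'
    subst ha'; subst hb'; subst hc'
    have key : schurWord ([a+1, a, a+1] ++ s) c0 = schurWord ([a+1, a+1, a] ++ s) c0 := by
      rw [schurWord_append, schurWord_append]
      cases hsc : schurWord s c0 with
      | none => rw [foldr_none, foldr_none]
      | some d =>
        have hd : IsPartition d := schurWord_isPartition hc0 hsc
        exact plactic1 a hd
    rw [List.append_assoc, List.append_assoc, schurWord_append p _ c0,
      schurWord_append p _ c0, key]
  | k2 p s a b c h1 h2 =>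
    have ha : a = i ∨ a = i + 1 := hu a (by simp)
    have hb : b = i ∨ b = i + 1 := hu b (by simp)
    have hcc : c = i ∨ c = i + 1 := hu c (by simp)
    have hc' : c = i + 1 := by
      rcases hcc with h' | h'
      · exfalso
        subst h'
        rcases hb with h'' | h'' <;> subst h''
        · exact lt_irrefl _ h2
        · exact absurd h2 (not_lt.mpr (le_of_lt hii))
      · exact h'
    have hb' : b = i := by
      rcases hb with h' | h'
      · exact h'
      · exfalso; subst h'; subst hc'; exact lt_irrefl _ h2
    have ha' : a = i := by
      rcases ha with h' | h'
      · exact h'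
      · exfalso; subst h'; subst hb'; exact absurd h1 (not_le.mpr hii)
    subst ha'; subst hb'; subst hc'
    have key : schurWord ([b, b+1, b] ++ s) c0 = schurWord ([b+1, b, b] ++ s) c0 := by
      rw [schurWord_append, schurWord_append]
      cases hsc : schurWord s c0 with
      | none => rw [foldr_none, foldr_none]
      | some d =>
        have hd : IsPartition d := schurWord_isPartition hc0 hsc
        exact plactic2 b hd
    rw [List.append_assoc, List.append_assoc, schurWord_append p _ c0,
      schurWord_append p _ c0, key]

lemma knuthEquiv_schur {i : ℕ+} {u v : List ℕ+} (h : KnuthEquiv u v) :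
    ((∀ a ∈ u, a = i ∨ a = i + 1) ↔ (∀ a ∈ v, a = i ∨ a = i + 1)) ∧
      ((∀ a ∈ u, a = i ∨ a = i + 1) →
        ∀ c : ℕ+ → ℕ, IsPartition c → schurWord u c = schurWord v c) := by
  induction h with
  | rel x y hxy =>
    exact ⟨knuthStep_letters hxy _, fun hu => step_schur hxy hu⟩
  | refl x => exact ⟨Iff.rfl, fun _ _ _ => rfl⟩
  | symm x y hxy ih =>
    exact ⟨ih.1.symm, fun hv c hc => (ih.2 (ih.1.mpr hv) c hc).symm⟩
  | trans x y z hxy hyz ih1 ih2 =>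
    exact ⟨ih1.1.trans ih2.1, fun hu c hc =>
      (ih1.2 hu c hc).trans (ih2.2 (ih1.1.mp hu) c hc)⟩

lemma alpha_nil (i : ℕ+) : alpha i [] = 0 := by simp [alpha]

lemma alpha_cons (i a : ℕ+) (r : List ℕ+) :
    alpha i (a :: r) = max ((a :: r).count (i + 1) - (a :: r).count i) (alpha i r) := by
  simp [alpha, List.tails_cons]

lemma alpha_ge_self (i : ℕ+) (x : List ℕ+) : x.count (i + 1) - x.count i ≤ alpha i x := by
  cases x with
  | nil => simp
  | cons a r => rw [alpha_cons]; exact le_max_left _ _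

lemma foldr_max_le {l : List ℕ} {m : ℕ} (h : ∀ v ∈ l, v ≤ m) : l.foldr max 0 ≤ m := by
  induction l with
  | nil => exact Nat.zero_le m
  | cons a r ih =>
    simp only [List.foldr_cons]
    exact max_le (h a (by simp)) (ih fun v hv => h v (by simp [hv]))

lemma alpha_le_county (i : ℕ+) (x : List ℕ+) : alpha i x ≤ x.count (i + 1) := by
  apply foldr_max_le
  intro v hv
  simp only [List.mem_map] at hv
  obtain ⟨s, hs, rfl⟩ := hv
  have hsub : s.Sublist x := (List.mem_tails s x |>.mp hs).sublist
  have := hsub.count_le (i + 1)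
  omega

lemma alpha_append_y (i : ℕ+) (r : List ℕ+) : alpha i (r ++ [i + 1]) = alpha i r + 1 := by
  induction r with
  | nil =>
    simp only [List.nil_append, alpha_nil]
    rw [alpha_cons]
    simp [pn_ne_succ i, pn_succ_ne i, List.count_singleton', alpha_nil]
  | cons a r' ih =>
    rw [List.cons_append, alpha_cons, ih, alpha_cons]
    have e1 : (a :: (r' ++ [i + 1])).count (i + 1) = (a :: r').count (i + 1) + 1 := by
      simp [List.count_cons, List.count_append, List.count_singleton']
      omega
    have e2 : (a :: (r' ++ [i + 1])).count i = (a :: r').count i := by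
      simp [List.count_cons, List.count_append, List.count_singleton', pn_ne_succ i, pn_succ_ne i]
    rw [e1, e2]
    omega

lemma alpha_append_x (i : ℕ+) (r : List ℕ+) : alpha i (r ++ [i]) = alpha i r - 1 := by
  induction r with
  | nil =>
    simp only [List.nil_append, alpha_nil]
    rw [alpha_cons]
    simp [pn_succ_ne i, pn_ne_succ i, List.count_singleton', alpha_nil]
  | cons a r' ih =>
    rw [List.cons_append, alpha_cons, ih, alpha_cons]
    have e1 : (a :: (r' ++ [i])).count (i + 1) = (a :: r').count (i + 1) := by
      simp [List.count_cons, List.count_append, List.count_singleton', pn_succ_ne i, pn_ne_succ i]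
    have e2 : (a :: (r' ++ [i])).count i = (a :: r').count i + 1 := by
      simp [List.count_cons, List.count_append, List.count_singleton']
      omega
    rw [e1, e2]
    omega

def stairs (i : ℕ+) (M d0 cx cy : ℕ) : ℕ+ → ℕ := fun j =>
  if j < i then M else if j = i then d0 + cx else if j = i + 1 then cy else 0

lemma stairs_at_lt {i : ℕ+} (M d0 cx cy : ℕ) {j : ℕ+} (hj : j < i) :
    stairs i M d0 cx cy j = M := by simp [stairs, hj]

lemma stairs_at_i (i : ℕ+) (M d0 cx cy : ℕ) : stairs i M d0 cx cy i = d0 + cx := by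
  simp [stairs]

lemma stairs_at_succ (i : ℕ+) (M d0 cx cy : ℕ) : stairs i M d0 cx cy (i + 1) = cy := by
  simp [stairs, pn_succ_ne i, not_lt.mpr (le_of_lt (pn_lt_succ i))]

lemma stairs_isPartition {i : ℕ+} {M d0 cx cy : ℕ} (hcy : cy ≤ d0 + cx)
    (hM : d0 + cx ≤ M) : IsPartition (stairs i M d0 cx cy) := by
  constructor
  · intro j
    rcases lt_trichotomy j i with hj | hj | hj
    · have hj1 : j + 1 ≤ i := PNat.add_one_le_iff.mpr hj
      rw [stairs_at_lt M d0 cx cy hj]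
      rcases lt_or_eq_of_le hj1 with h | h
      · rw [stairs_at_lt M d0 cx cy h]
      · rw [show stairs i M d0 cx cy (j+1) = d0 + cx by simp [stairs, h, lt_irrefl]]
        exact hM
    · rw [hj, stairs_at_succ, stairs_at_i]
      exact hcy
    · have h1 : ¬ (j + 1 < i) := not_lt.mpr (le_of_lt (lt_trans hj (pn_lt_succ j)))
      have h2 : j + 1 ≠ i := ne_of_gt (lt_trans hj (pn_lt_succ j))
      have h3 : j + 1 ≠ i + 1 := fun h => absurd (pn_succ_inj h) (ne_of_gt hj)
      rw [show stairs i M d0 cx cy (j+1) = 0 by simp [stairs, h1, h2, h3]]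
      exact Nat.zero_le _
  · refine ⟨i + 1 + 1, fun j hj => ?_⟩
    have hij : i + 1 < j := lt_of_lt_of_le (pn_lt_succ (i+1)) hj
    have hij' : i < j := lt_trans (pn_lt_succ i) hij
    simp [stairs, not_lt.mpr (le_of_lt hij'), ne_of_gt hij', ne_of_gt hij]

lemma stairs_eval {i : ℕ+} {M d0 : ℕ} (x : List ℕ+) (hx : ∀ a ∈ x, a = i ∨ a = i + 1)
    (hM : d0 + x.count i < M) :
    schurWord x (stairs i M d0 0 0) =
      if alpha i x ≤ d0 then some (stairs i M d0 (x.count i) (x.count (i + 1))) else none := by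
  induction x with
  | nil => simp [schurWord_nil, alpha_nil]
  | cons a r ih =>
    have hr : ∀ b ∈ r, b = i ∨ b = i + 1 := fun b hb => hx b (List.mem_cons_of_mem a hb)
    have hcx : r.count i ≤ (a :: r).count i := by
      rw [List.count_cons]; exact Nat.le_add_right _ _
    have hMr : d0 + r.count i < M := by omega
    rw [schurWord_cons, ih hr hMr]
    by_cases hα : alpha i r ≤ d0
    · rw [if_pos hα, Option.bind_some]
      have hge := alpha_ge_self i r
      have hpS : IsPartition (stairs i M d0 (r.count i) (r.count (i + 1))) :=
        stairs_isPartition (by omega) (by omega)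
      rcases hx a (List.mem_cons_self (a := a) (l := r)) with ha | ha
      · subst ha
        have hok : ∀ j : ℕ+, a = j + 1 →
            stairs a M d0 (r.count a) (r.count (a + 1)) a <
              stairs a M d0 (r.count a) (r.count (a + 1)) j := by
          intro j hj
          rw [stairs_at_i, stairs_at_lt _ _ _ _ (pn_pred_lt hj)]
          omega
        rw [addBox_pos hpS hok]
        have hα2 : alpha a (a :: r) ≤ d0 := by
          rw [alpha_cons]
          have e1 : (a :: r).count (a + 1) = r.count (a + 1) := by
            simp [List.count_cons, pn_succ_ne a, pn_ne_succ a]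
          have e2 : (a :: r).count a = r.count a + 1 := by
            simp [List.count_cons]
          rw [e1, e2]
          omega
        rw [if_pos hα2]
        congr 1
        funext j
        rw [Function.update_apply]
        have e1 : (a :: r).count (a + 1) = r.count (a + 1) := by
          simp [List.count_cons, pn_succ_ne a, pn_ne_succ a]
        have e2 : (a :: r).count a = r.count a + 1 := by
          simp [List.count_cons]
        by_cases hj : j = a
        · rw [if_pos hj, hj, e2, stairs_at_i, stairs_at_i]
          omega
        · rw [if_neg hj, e1, e2]
          simp only [stairs]
          split_ifs with h1 h2 h3 <;> first | rfl | omega | (exfalso; exact hj h2)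
      · subst ha
        have vX := stairs_at_i i M d0 (r.count i) (r.count (i+1))
        have vY := stairs_at_succ i M d0 (r.count i) (r.count (i+1))
        have e1 : ((i+1) :: r).count (i + 1) = r.count (i + 1) + 1 := by
          simp [List.count_cons]
        have e2 : ((i+1) :: r).count i = r.count i := by
          simp [List.count_cons, pn_ne_succ i, pn_succ_ne i]
        by_cases hok : r.count (i+1) < d0 + r.count i
        · have hcond : ∀ j : ℕ+, i + 1 = j + 1 →
              stairs i M d0 (r.count i) (r.count (i + 1)) (i+1) <
                stairs i M d0 (r.count i) (r.count (i + 1)) j := by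
            intro j hj
            rw [(pn_succ_inj hj).symm, vX, vY]
            exact hok
          rw [addBox_pos hpS hcond]
          have hα2 : alpha i ((i+1) :: r) ≤ d0 := by
            rw [alpha_cons, e1, e2]
            omega
          rw [if_pos hα2]
          congr 1
          funext j
          rw [Function.update_apply]
          by_cases hj : j = i + 1
          · rw [if_pos hj, hj, stairs_at_succ, e1, stairs_at_succ]
          · rw [if_neg hj, e1, e2]
            simp only [stairs]
            split_ifs with h1 h2 h3 <;> first | rfl | omega | (exfalso; exact hj h3)
        · have hcond : ¬ ∀ j : ℕ+, i + 1 = j + 1 →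
              stairs i M d0 (r.count i) (r.count (i + 1)) (i+1) <
                stairs i M d0 (r.count i) (r.count (i + 1)) j := by
            intro hall
            have := hall i rfl
            rw [vX, vY] at this
            exact hok this
          rw [addBox_neg hpS hcond]
          have hα2 : ¬ alpha i ((i+1) :: r) ≤ d0 := by
            rw [alpha_cons, e1, e2]
            omega
          rw [if_neg hα2]
    · rw [if_neg hα, Option.bind_none]
      have hα2 : ¬ alpha i (a :: r) ≤ d0 := by
        rw [alpha_cons]
        omega
      rw [if_neg hα2]

lemma ke_refl (u : List ℕ+) : KnuthEquiv u u := Relation.EqvGen.refl u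
lemma ke_symm {u v : List ℕ+} (h : KnuthEquiv u v) : KnuthEquiv v u := Relation.EqvGen.symm _ _ h
lemma ke_trans {u v w : List ℕ+} (h1 : KnuthEquiv u v) (h2 : KnuthEquiv v w) :
    KnuthEquiv u w := Relation.EqvGen.trans _ _ _ h1 h2
lemma ke_step {u v : List ℕ+} (h : KnuthStep u v) : KnuthEquiv u v := Relation.EqvGen.rel _ _ h

lemma knuthStep_append_left (w : List ℕ+) {u v : List ℕ+} (h : KnuthStep u v) :
    KnuthStep (w ++ u) (w ++ v) := by
  cases h with
  | k1 p s a b c h1 h2 =>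
    have := KnuthStep.k1 (w ++ p) s a b c h1 h2
    simpa [List.append_assoc] using this
  | k2 p s a b c h1 h2 =>
    have := KnuthStep.k2 (w ++ p) s a b c h1 h2
    simpa [List.append_assoc] using this

lemma knuthStep_append_right (w : List ℕ+) {u v : List ℕ+} (h : KnuthStep u v) :
    KnuthStep (u ++ w) (v ++ w) := by
  cases h with
  | k1 p s a b c h1 h2 =>
    have := KnuthStep.k1 p (s ++ w) a b c h1 h2
    simpa [List.append_assoc] using this
  | k2 p s a b c h1 h2 =>
    have := KnuthStep.k2 p (s ++ w) a b c h1 h2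
    simpa [List.append_assoc] using this

lemma ke_append_left (w : List ℕ+) {u v : List ℕ+} (h : KnuthEquiv u v) :
    KnuthEquiv (w ++ u) (w ++ v) := by
  induction h with
  | rel x y hxy => exact ke_step (knuthStep_append_left w hxy)
  | refl x => exact ke_refl _
  | symm x y hxy ih => exact ke_symm ih
  | trans x y z hxy hyz ih1 ih2 => exact ke_trans ih1 ih2

lemma ke_append_right (w : List ℕ+) {u v : List ℕ+} (h : KnuthEquiv u v) :
    KnuthEquiv (u ++ w) (v ++ w) := by
  induction h with
  | rel x y hxy => exact ke_step (knuthStep_append_right w hxy)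
  | refl x => exact ke_refl _
  | symm x y hxy ih => exact ke_symm ih
  | trans x y z hxy hyz ih1 ih2 => exact ke_trans ih1 ih2

lemma ke_cons (a : ℕ+) {u v : List ℕ+} (h : KnuthEquiv u v) :
    KnuthEquiv (a :: u) (a :: v) := ke_append_left [a] h

/-- `y^(b+1) x ~ y x y^b` -/
lemma claimD (i : ℕ+) : ∀ b : ℕ, KnuthEquiv (List.replicate (b+1) (i+1) ++ [i])
    ((i+1) :: i :: List.replicate b (i+1)) := by
  intro b
  induction b with
  | zero => exact ke_refl _
  | succ b ih =>
    have step1 : KnuthEquiv (List.replicate (b+2) (i+1) ++ [i])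
        ((i+1) :: (List.replicate (b+1) (i+1) ++ [i])) := by
      rw [List.replicate_succ, List.cons_append]
      exact ke_refl _
    have step2 : KnuthEquiv ((i+1) :: (List.replicate (b+1) (i+1) ++ [i]))
        ((i+1) :: (i+1) :: i :: List.replicate b (i+1)) := ke_cons _ ih
    have step3 : KnuthStep (([] : List ℕ+) ++ [i+1, i, i+1] ++ List.replicate b (i+1))
        (([] : List ℕ+) ++ [i+1, i+1, i] ++ List.replicate b (i+1)) :=
      KnuthStep.k1 [] (List.replicate b (i+1)) i (i+1) (i+1) (pn_lt_succ i) le_rfl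
    have step3' : KnuthEquiv ((i+1) :: (i+1) :: i :: List.replicate b (i+1))
        ((i+1) :: i :: (i+1) :: List.replicate b (i+1)) := by
      apply ke_symm
      have := ke_step step3
      simpa using this
    have : KnuthEquiv (List.replicate (b+2) (i+1) ++ [i])
        ((i+1) :: i :: (i+1) :: List.replicate b (i+1)) :=
      ke_trans (ke_trans step1 step2) step3'
    rw [show List.replicate (b+1) (i+1) = (i+1) :: List.replicate b (i+1) from List.replicate_succ]
    exact this

/-- `x^a y^(b+1) x ~ y x^(a+1) y^b` -/
lemma claimC (i : ℕ+) : ∀ (a b : ℕ),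
    KnuthEquiv (List.replicate a i ++ List.replicate (b+1) (i+1) ++ [i])
      ((i+1) :: (List.replicate (a+1) i ++ List.replicate b (i+1))) := by
  intro a
  induction a with
  | zero =>
    intro b
    have := claimD i b
    simpa [List.replicate_succ] using this
  | succ a ih =>
    intro b
    have step1 : KnuthEquiv (List.replicate (a+1) i ++ List.replicate (b+1) (i+1) ++ [i])
        (i :: (List.replicate a i ++ List.replicate (b+1) (i+1) ++ [i])) := by
      rw [List.replicate_succ, List.cons_append, List.cons_append]
      exact ke_refl _
    have step2 := ke_cons i (ih b)
    have step3 : KnuthStep (([] : List ℕ+) ++ [i, i+1, i] ++ (List.replicate a i ++ List.replicate b (i+1)))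
        (([] : List ℕ+) ++ [i+1, i, i] ++ (List.replicate a i ++ List.replicate b (i+1))) :=
      KnuthStep.k2 [] _ i i (i+1) le_rfl (pn_lt_succ i)
    have step3' : KnuthEquiv (i :: (i+1) :: (List.replicate (a+1) i ++ List.replicate b (i+1)))
        ((i+1) :: i :: i :: (List.replicate a i ++ List.replicate b (i+1))) := by
      have := ke_step step3
      simpa [List.replicate_succ] using this
    refine ke_trans (ke_trans step1 step2) (ke_trans step3' ?_)
    rw [show List.replicate (a+1+1) i = i :: i :: List.replicate a i by
      rw [List.replicate_succ, List.replicate_succ]]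
    rw [List.cons_append, List.cons_append]
    exact ke_refl _

def nf (i : ℕ+) (x : List ℕ+) : List ℕ+ :=
  List.replicate (x.count (i+1) - alpha i x) (i+1) ++ List.replicate (x.count i) i
    ++ List.replicate (alpha i x) (i+1)

lemma norm (i : ℕ+) (x : List ℕ+) (hx : ∀ a ∈ x, a = i ∨ a = i + 1) :
    KnuthEquiv x (nf i x) := by
  induction x using List.reverseRecOn with
  | nil =>
    have : nf i [] = [] := by simp [nf, alpha_nil]
    rw [this]
    exact ke_refl []
  | append_singleton r a ih =>
    have hr : ∀ b ∈ r, b = i ∨ b = i + 1 := fun b hb => hx b (by simp [hb])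
    have ihr := ih hr
    have ha := hx a (by simp)
    rcases ha with ha | ha
    · subst ha
      have e1 : (r ++ [a]).count (a+1) = r.count (a+1) := by
        simp [List.count_append, List.count_singleton', pn_succ_ne a, pn_ne_succ a]
      have e2 : (r ++ [a]).count a = r.count a + 1 := by
        simp [List.count_append, List.count_singleton']
      have e3 : alpha a (r ++ [a]) = alpha a r - 1 := alpha_append_x a r
      cases hb : alpha a r with
      | zero =>
        have hnf : nf a (r ++ [a]) = nf a r ++ [a] := by
          rw [nf, nf, e1, e2, e3, hb]
          simp [List.replicate_succ', List.append_assoc]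
        rw [hnf]
        exact ke_append_right [a] ihr
      | succ b =>
        have hble : b + 1 ≤ r.count (a+1) := hb ▸ alpha_le_county a r
        have key : KnuthEquiv (nf a r ++ [a]) (nf a (r ++ [a])) := by
          rw [nf, nf, e1, e2, e3, hb,
            show b + 1 - 1 = b from rfl,
            show r.count (a+1) - b = (r.count (a+1) - (b+1)) + 1 from by omega]
          have h1 : List.replicate (r.count (a+1) - (b+1)) (a+1) ++ List.replicate (r.count a) a
                ++ List.replicate (b+1) (a+1) ++ [a]
              = List.replicate (r.count (a+1) - (b+1)) (a+1) ++
                (List.replicate (r.count a) a ++ List.replicate (b+1) (a+1) ++ [a]) := by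
            simp [List.append_assoc]
          have h2 : List.replicate ((r.count (a+1) - (b+1)) + 1) (a+1)
                ++ List.replicate (r.count a + 1) a ++ List.replicate b (a+1)
              = List.replicate (r.count (a+1) - (b+1)) (a+1) ++
                ((a+1) :: (List.replicate (r.count a + 1) a ++ List.replicate b (a+1))) := by
            rw [List.replicate_succ' (n := r.count (a+1) - (b+1))]
            simp [List.append_assoc]
          rw [h1, h2]
          exact ke_append_left _ (claimC a (r.count a) b)
        exact ke_trans (ke_append_right [a] ihr) key
    · subst ha
      have e1 : (r ++ [i+1]).count (i+1) = r.count (i+1) + 1 := by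
        simp [List.count_append, List.count_singleton']
      have e2 : (r ++ [i+1]).count i = r.count i := by
        simp [List.count_append, List.count_singleton', pn_ne_succ i, pn_succ_ne i]
      have e3 : alpha i (r ++ [i+1]) = alpha i r + 1 := alpha_append_y i r
      have hnf : nf i (r ++ [i+1]) = nf i r ++ [i+1] := by
        rw [nf, nf, e1, e2, e3,
          show r.count (i+1) + 1 - (alpha i r + 1) = r.count (i+1) - alpha i r from by omega,
          List.replicate_succ' (n := alpha i r)]
        simp [List.append_assoc]
      rw [hnf]
      exact ke_append_right [i+1] ihr


theorem stmt12 (i : ℕ+) (x y : List ℕ+)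
    (hx : ∀ a ∈ x, a = i ∨ a = i + 1) (hy : ∀ a ∈ y, a = i ∨ a = i + 1) :
    (∀ c : ℕ+ → ℕ, IsPartition c → schurWord x c = schurWord y c) ↔
      KnuthEquiv x y := by
  constructor
  · intro h
    have hcnt : x.count i = y.count i ∧ x.count (i+1) = y.count (i+1) := by
      have hpart : IsPartition (stairs i (max (alpha i x) (alpha i y) + x.count i + y.count i + 1)
          (max (alpha i x) (alpha i y)) 0 0) := stairs_isPartition (by omega) (by omega)
      have heq := h _ hpart
      rw [stairs_eval x hx (by omega), stairs_eval y hy (by omega),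
        if_pos (le_max_left _ _), if_pos (le_max_right _ _)] at heq
      have heq2 := Option.some.inj heq
      constructor
      · have := congrFun heq2 i
        rw [stairs_at_i, stairs_at_i] at this
        omega
      · have := congrFun heq2 (i+1)
        rw [stairs_at_succ, stairs_at_succ] at this
        exact this
    have halpha : alpha i x = alpha i y := by
      have h1 : alpha i y ≤ alpha i x := by
        have hpart : IsPartition (stairs i (alpha i x + x.count i + y.count i + 1)
            (alpha i x) 0 0) := stairs_isPartition (by omega) (by omega)
        have heq := h _ hpart
        rw [stairs_eval x hx (by omega), stairs_eval y hy (by omega), if_pos le_rfl] at heq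
        by_contra hcon
        rw [if_neg hcon] at heq
        exact Option.some_ne_none _ heq
      have h2 : alpha i x ≤ alpha i y := by
        have hpart : IsPartition (stairs i (alpha i y + x.count i + y.count i + 1)
            (alpha i y) 0 0) := stairs_isPartition (by omega) (by omega)
        have heq := (h _ hpart).symm
        rw [stairs_eval x hx (by omega), stairs_eval y hy (by omega), if_pos le_rfl] at heq
        by_contra hcon
        rw [if_neg hcon] at heq
        exact Option.some_ne_none _ heq
      omega
    have hnf : nf i x = nf i y := by rw [nf, nf, hcnt.1, hcnt.2, halpha]
    exact ke_trans (hnf ▸ norm i x hx) (ke_symm (norm i y hy))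
  · intro h c hc
    exact (knuthEquiv_schur h).2 hx c hc
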